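/- Let α ⊆ Δ be a closed subset. Then the subgroup GL_n(R)_α of GL_n(R) generated by the elementary matrices {ε_ij(r) : (i,j) ∈ α, r ∈ R} consists exactly of those matrices M = (a_kl) with a_kk = 1 for all k, a_kl arbitrary for (k,l) ∈ α, and a_kl = 0 for (k,l) ∈ Δ∖α. In particular, every n×n matrix over R with 1's on the diagonal whose off-diagonal support is contained in α is invertible, and this set of matrices is a subgroup of GL_n(R) equal to GL_n(R)_α. -/

import Mathlib

/-- The elementary matrix `ε_{ij}(r)`: the identity matrix with an extra entry `r`
in the off-diagonal position `(i, j)`. -/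
def elemMat {n : ℕ} {R : Type*} [Ring R] (i j : Fin n) (r : R) :
    Matrix (Fin n) (Fin n) R :=
  1 + Matrix.single i j r

/-- The elementary matrix `ε_{ij}(r)` as a unit (invertible matrix) for `i ≠ j`,
i.e. as an element of `GL_n(R)`. -/
def elemUnit {n : ℕ} {R : Type*} [Ring R] (i j : Fin n) (hij : i ≠ j) (r : R) :
    (Matrix (Fin n) (Fin n) R)ˣ where
  val := elemMat i j r
  inv := elemMat i j (-r)
  val_inv := by
    have h0 : Matrix.single i j r * Matrix.single i j (-r) = 0 :=
      Matrix.single_mul_single_of_ne _ _ _ _ hij.symm _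
    simp [elemMat, mul_add, add_mul, h0, ← Matrix.single_add, add_assoc]
  inv_val := by
    have h0 : Matrix.single i j (-r) * Matrix.single i j r = 0 :=
      Matrix.single_mul_single_of_ne _ _ _ _ hij.symm _
    simp [elemMat, mul_add, add_mul, h0, ← Matrix.single_add, add_assoc]

/-- `GL_n(R)_α` : the subgroup of `GL_n(R)` generated by the elementary matrices
`ε_{ij}(r)` with off-diagonal position `(i, j)` in `α`. -/
def glSub {n : ℕ} (R : Type*) [Ring R] (α : Set (Fin n × Fin n)) :
    Subgroup (Matrix (Fin n) (Fin n) R)ˣ :=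
  Subgroup.closure
    {u | ∃ (i j : Fin n) (hij : i ≠ j) (r : R), (i, j) ∈ α ∧ u = elemUnit i j hij r}

section Aux

variable {n : ℕ} {R : Type*} [Ring R] {α : Set (Fin n × Fin n)}

lemma elemMat_diag (i j : Fin n) (hij : i ≠ j) (r : R) (k : Fin n) :
    elemMat i j r k k = 1 := by
  simp only [elemMat, Matrix.add_apply, Matrix.one_apply_eq, Matrix.single,
    Matrix.of_apply]
  rw [if_neg, add_zero]
  rintro ⟨rfl, rfl⟩; exact hij rfl

lemma elemMat_off (i j : Fin n) (r : R) (k l : Fin n) (hkl : k ≠ l)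
    (h : ¬(i = k ∧ j = l)) : elemMat i j r k l = 0 := by
  simp only [elemMat, Matrix.add_apply, Matrix.one_apply_ne hkl, Matrix.single,
    Matrix.of_apply]
  rw [if_neg h, add_zero]

lemma glSub_P_mul (hΔ : ∀ p ∈ α, p.1 ≠ p.2)
    (hclosed : ∀ i j k : Fin n, (i, j) ∈ α → (j, k) ∈ α → (i, k) ∈ α)
    {M N : Matrix (Fin n) (Fin n) R}
    (hMd : ∀ k, M k k = 1) (hMs : ∀ k l, k ≠ l → (k, l) ∉ α → M k l = 0)
    (hNd : ∀ k, N k k = 1) (hNs : ∀ k l, k ≠ l → (k, l) ∉ α → N k l = 0) :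
    (∀ k, (M * N) k k = 1) ∧
      ∀ k l, k ≠ l → (k, l) ∉ α → (M * N) k l = 0 := by
  constructor
  · intro k
    rw [Matrix.mul_apply, Finset.sum_eq_single k]
    · rw [hMd, hNd, one_mul]
    · intro m _ hmk
      by_cases hkm : (k, m) ∈ α
      · by_cases hmk2 : (m, k) ∈ α
        · exact absurd (hclosed k m k hkm hmk2) (fun h => hΔ _ h rfl)
        · rw [hNs m k hmk hmk2, mul_zero]
      · rw [hMs k m (Ne.symm hmk) hkm, zero_mul]
    · intro h; exact absurd (Finset.mem_univ k) h
  · intro k l hkl hklα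
    rw [Matrix.mul_apply]
    apply Finset.sum_eq_zero
    intro m _
    by_cases hmk : m = k
    · subst hmk; rw [hNs m l hkl hklα, mul_zero]
    by_cases hml : m = l
    · subst hml; rw [hMs k m hkl hklα, zero_mul]
    by_cases hkm : (k, m) ∈ α
    · by_cases hml2 : (m, l) ∈ α
      · exact absurd (hclosed k m l hkm hml2) hklα
      · rw [hNs m l hml hml2, mul_zero]
    · rw [hMs k m (Ne.symm hmk) hkm, zero_mul]

open scoped Classical in
/-- Key factorization lemma: every matrix of the right shape is the value of an element
of `glSub R α`. -/
lemma glSub_exists_unit (hΔ : ∀ p ∈ α, p.1 ≠ p.2)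
    (hclosed : ∀ i j k : Fin n, (i, j) ∈ α → (j, k) ∈ α → (i, k) ∈ α) :
    ∀ N : ℕ, ∀ A : Matrix (Fin n) (Fin n) R,
      (Finset.univ.filter (fun p : Fin n × Fin n => p.1 ≠ p.2 ∧ A p.1 p.2 ≠ 0)).card ≤ N →
      (∀ k, A k k = 1) → (∀ k l, k ≠ l → (k, l) ∉ α → A k l = 0) →
      ∃ u : (Matrix (Fin n) (Fin n) R)ˣ, u ∈ glSub R α ∧ u.val = A := by
  intro N
  induction N with
  | zero =>
    intro A hcard hAd hAs
    refine ⟨1, Subgroup.one_mem _, ?_⟩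
    show (1 : Matrix (Fin n) (Fin n) R) = A
    have hemp : (Finset.univ.filter (fun p : Fin n × Fin n => p.1 ≠ p.2 ∧ A p.1 p.2 ≠ 0)) = ∅ :=
      Finset.card_eq_zero.mp (Nat.le_zero.mp hcard)
    ext k l
    by_cases hkl : k = l
    · subst hkl; simp [hAd k, Matrix.one_apply]
    · have hnm : (k, l) ∉ (Finset.univ.filter
          (fun p : Fin n × Fin n => p.1 ≠ p.2 ∧ A p.1 p.2 ≠ 0)) := by
        rw [hemp]; exact Finset.notMem_empty _
      simp only [Finset.mem_filter, Finset.mem_univ, true_and, not_and, ne_eq, not_not] at hnm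
      simp [Matrix.one_apply, hkl, hnm hkl]
  | succ N ih =>
    intro A hcard hAd hAs
    by_cases hz : (Finset.univ.filter (fun p : Fin n × Fin n => p.1 ≠ p.2 ∧ A p.1 p.2 ≠ 0)) = ∅
    · exact ih A (by rw [hz]; simp) hAd hAs
    -- Pick an α-minimal row `i` among rows with a nonzero off-diagonal entry.
    · have hwf : WellFounded (fun a b : Fin n => (a, b) ∈ α) := by
        have h1 : IsTrans (Fin n) (fun a b => (a, b) ∈ α) :=
          ⟨fun a b c h1 h2 => hclosed a b c h1 h2⟩
        have h2 : IsIrrefl (Fin n) (fun a b => (a, b) ∈ α) :=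
          ⟨fun a h => hΔ _ h rfl⟩
        exact Finite.wellFounded_of_trans_of_irrefl _
      have hSne : {i : Fin n | ∃ j, i ≠ j ∧ A i j ≠ 0}.Nonempty := by
        obtain ⟨p, hp⟩ := Finset.nonempty_iff_ne_empty.mpr hz
        simp only [Finset.mem_filter, Finset.mem_univ, true_and] at hp
        exact ⟨p.1, p.2, hp.1, hp.2⟩
      obtain ⟨i, hiS, hmin⟩ := hwf.has_min _ hSne
      obtain ⟨j, hij, hAij⟩ := hiS
      have hijα : (i, j) ∈ α := by
        by_contra h
        exact hAij (hAs i j hij h)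
      -- minimality: column `i` of `A` vanishes off the diagonal
      have hcol : ∀ k, k ≠ i → A k i = 0 := by
        intro k hki
        by_contra h
        have hkiα : (k, i) ∈ α := by
          by_contra h2
          exact h (hAs k i hki h2)
        exact hmin k ⟨i, hki, h⟩ hkiα
      -- the matrix with the `(i,j)` entry cleared
      set A' : Matrix (Fin n) (Fin n) R :=
        Matrix.of (fun k l => if k = i ∧ l = j then 0 else A k l) with hA'
      have hA'app : ∀ k l, A' k l = if k = i ∧ l = j then 0 else A k l := fun k l => rfl
      have hA'd : ∀ k, A' k k = 1 := by
        intro k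
        rw [hA'app, if_neg, hAd]
        rintro ⟨rfl, rfl⟩; exact hij rfl
      have hA's : ∀ k l, k ≠ l → (k, l) ∉ α → A' k l = 0 := by
        intro k l hkl hklα
        rw [hA'app]
        split
        · rfl
        · exact hAs k l hkl hklα
      have hfact : A' * elemMat i j (A i j) = A := by
        ext k l
        have : A' * elemMat i j (A i j)
            = A' + A' * Matrix.single i j (A i j) := by
          rw [elemMat, mul_add, mul_one]
        rw [this, Matrix.add_apply]
        by_cases hlj : l = j
        · subst hlj
          rw [Matrix.mul_single_apply_same]
          by_cases hki : k = i
          · subst hki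
            rw [hA'app, if_pos ⟨rfl, rfl⟩, hA'd, one_mul, zero_add]
          · rw [hA'app, if_neg (fun h => hki h.1), hA'app,
              if_neg (fun h => hij h.2), hcol k hki, zero_mul, add_zero]
        · rw [Matrix.mul_single_apply_of_ne (hbj := hlj), add_zero,
            hA'app, if_neg (fun h => hlj h.2)]
      -- the count strictly decreases
      have hcard' : (Finset.univ.filter
          (fun p : Fin n × Fin n => p.1 ≠ p.2 ∧ A' p.1 p.2 ≠ 0)).card ≤ N := by
        have hsub : (Finset.univ.filter
            (fun p : Fin n × Fin n => p.1 ≠ p.2 ∧ A' p.1 p.2 ≠ 0))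
            ⊂ (Finset.univ.filter
            (fun p : Fin n × Fin n => p.1 ≠ p.2 ∧ A p.1 p.2 ≠ 0)) := by
          constructor
          · intro p hp
            simp only [Finset.mem_filter, Finset.mem_univ, true_and] at hp ⊢
            refine ⟨hp.1, ?_⟩
            intro h
            apply hp.2
            rw [hA'app]
            split
            · rfl
            · exact h
          · intro hsup
            have h1 : (i, j) ∈ (Finset.univ.filter
                (fun p : Fin n × Fin n => p.1 ≠ p.2 ∧ A p.1 p.2 ≠ 0)) := by
              simp only [Finset.mem_filter, Finset.mem_univ, true_and]
              exact ⟨hij, hAij⟩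
            have h2 := hsup h1
            simp only [Finset.mem_filter, Finset.mem_univ, true_and] at h2
            exact h2.2 (by rw [hA'app, if_pos ⟨rfl, rfl⟩])
        have := Finset.card_lt_card hsub
        omega
      obtain ⟨u', hu'mem, hu'val⟩ := ih A' hcard' hA'd hA's
      refine ⟨u' * elemUnit i j hij (A i j), ?_, ?_⟩
      · exact mul_mem hu'mem (Subgroup.subset_closure ⟨i, j, hij, A i j, hijα, rfl⟩)
      · rw [Units.val_mul, hu'val]
        exact hfact

end Aux

/-- for a closed subset `α` of the set of off-diagonal positions, the subgroup
`GL_n(R)_α` generated by the elementary matrices with positions in `α` consists exactly of the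
(invertible) matrices having `1`s on the diagonal, arbitrary entries at positions in `α` and
`0`s at the off-diagonal positions outside `α`; moreover every matrix of this shape is
invertible. -/
theorem glSub_carrier_eq {n : ℕ} (R : Type*) [Ring R]
    (α : Set (Fin n × Fin n))
    (hΔ : ∀ p ∈ α, p.1 ≠ p.2)
    (hclosed : ∀ i j k : Fin n, (i, j) ∈ α → (j, k) ∈ α → (i, k) ∈ α) :
    (∀ M : (Matrix (Fin n) (Fin n) R)ˣ,
        M ∈ glSub R α ↔
          (∀ k, M.val k k = 1) ∧
            ∀ k l : Fin n, k ≠ l → (k, l) ∉ α → M.val k l = 0) ∧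
      ∀ A : Matrix (Fin n) (Fin n) R,
        (∀ k, A k k = 1) → (∀ k l : Fin n, k ≠ l → (k, l) ∉ α → A k l = 0) → IsUnit A := by
  classical
  -- abbreviation for the shape condition
  set P : Matrix (Fin n) (Fin n) R → Prop :=
    fun A => (∀ k, A k k = 1) ∧ ∀ k l : Fin n, k ≠ l → (k, l) ∉ α → A k l = 0 with hP
  have hPmul : ∀ {M N : Matrix (Fin n) (Fin n) R}, P M → P N → P (M * N) :=
    fun hM hN => glSub_P_mul hΔ hclosed hM.1 hM.2 hN.1 hN.2
  -- forward direction by closure induction, carrying the condition for the inverse too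
  have hfwd : ∀ M : (Matrix (Fin n) (Fin n) R)ˣ, M ∈ glSub R α →
      P M.val ∧ P (M⁻¹ : (Matrix (Fin n) (Fin n) R)ˣ).val := by
    intro M hM
    refine Subgroup.closure_induction ?_ ?_ ?_ ?_ hM
    · rintro x ⟨i, j, hij, r, hijα, rfl⟩
      have key : ∀ s : R, P (elemMat i j s) := by
        intro s
        refine ⟨fun k => elemMat_diag i j hij s k, fun k l hkl hklα => ?_⟩
        refine elemMat_off i j s k l hkl ?_
        rintro ⟨rfl, rfl⟩
        exact hklα hijα
      exact ⟨key r, key (-r)⟩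
    · constructor <;>
        exact ⟨fun k => Matrix.one_apply_eq k, fun k l hkl _ => Matrix.one_apply_ne hkl⟩
    · intro x y _ _ hx hy
      refine ⟨hPmul hx.1 hy.1, ?_⟩
      have : ((x * y)⁻¹ : _ˣ) = y⁻¹ * x⁻¹ := by rw [mul_inv_rev]
      rw [this]
      exact hPmul hy.2 hx.2
    · intro x _ hx
      exact ⟨hx.2, by rw [inv_inv]; exact hx.1⟩
  constructor
  · intro M
    constructor
    · intro hM
      exact (hfwd M hM).1
    · rintro ⟨hMd, hMs⟩
      obtain ⟨u, humem, huval⟩ := glSub_exists_unit hΔ hclosed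
        (Finset.univ.filter (fun p : Fin n × Fin n => p.1 ≠ p.2 ∧ M.val p.1 p.2 ≠ 0)).card
        M.val le_rfl hMd hMs
      have : u = M := Units.ext huval
      rwa [this] at humem
  · intro A hAd hAs
    obtain ⟨u, _, huval⟩ := glSub_exists_unit hΔ hclosed
      (Finset.univ.filter (fun p : Fin n × Fin n => p.1 ≠ p.2 ∧ A p.1 p.2 ≠ 0)).card
      A le_rfl hAd hAs
    exact ⟨u, huval⟩
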